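/- For 0 < ν < 1 and p ∈ (0, π/2), the range of the function k ↦ ω(p+k) + ω(p−k) over real k is the interval [2ω(p), 2π − 2ω(p)], where ω(x) = arccos(ν cos x). -/

import Mathlib

open Real Set

private lemma aux_div_sqrt {c : ℝ} (hc : 0 < c) {t₁ t₂ : ℝ} (h : t₁ < t₂) :
    t₁ / Real.sqrt (c + t₁ ^ 2) < t₂ / Real.sqrt (c + t₂ ^ 2) := by
  have h₁ : 0 < c + t₁ ^ 2 := by positivity
  have h₂ : 0 < c + t₂ ^ 2 := by positivity
  have ha : 0 < Real.sqrt (c + t₁ ^ 2) := Real.sqrt_pos.2 h₁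
  have hb : 0 < Real.sqrt (c + t₂ ^ 2) := Real.sqrt_pos.2 h₂
  have ha2 : Real.sqrt (c + t₁ ^ 2) ^ 2 = c + t₁ ^ 2 := Real.sq_sqrt h₁.le
  have hb2 : Real.sqrt (c + t₂ ^ 2) ^ 2 = c + t₂ ^ 2 := Real.sq_sqrt h₂.le
  rw [div_lt_div_iff₀ ha hb]
  set a := Real.sqrt (c + t₁ ^ 2)
  set b := Real.sqrt (c + t₂ ^ 2)
  by_contra hcon
  push_neg at hcon
  rcases le_or_gt 0 t₁ with ht₁ | ht₁
  · have ht₂ : 0 < t₂ := lt_of_le_of_lt ht₁ h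
    have h1 : 0 < t₂ * a := mul_pos ht₂ ha
    have hsq : (t₂ * a) ^ 2 ≤ (t₁ * b) ^ 2 := by nlinarith
    nlinarith [mul_pos hc (mul_pos (sub_pos.2 h) (show (0:ℝ) < t₁ + t₂ by linarith))]
  · have h2 : t₁ * b < 0 := mul_neg_of_neg_of_pos ht₁ hb
    have ht₂ : t₂ < 0 := by nlinarith
    have hsq : (t₁ * b) ^ 2 ≤ (t₂ * a) ^ 2 := by nlinarith
    nlinarith [mul_pos hc (mul_pos (sub_pos.2 h) (show (0:ℝ) < -t₁ - t₂ by linarith))]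

theorem omega_pp_range (ν : ℝ) (hν0 : 0 < ν) (hν1 : ν < 1) (p : ℝ)
    (hp0 : 0 < p) (hp1 : p < Real.pi / 2) :
    Set.range (fun k : ℝ =>
        Real.arccos (ν * Real.cos (p + k)) + Real.arccos (ν * Real.cos (p - k)))
      = Set.Icc (2 * Real.arccos (ν * Real.cos p))
          (2 * Real.pi - 2 * Real.arccos (ν * Real.cos p)) := by
  set f : ℝ → ℝ := fun k =>
    Real.arccos (ν * Real.cos (p + k)) + Real.arccos (ν * Real.cos (p - k)) with hf
  have hcosp : 0 < Real.cos p := Real.cos_pos_of_mem_Ioo ⟨by linarith [Real.pi_pos], hp1⟩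
  -- bounds on ν * cos x
  have hbound : ∀ x : ℝ, |ν * Real.cos x| < 1 := by
    intro x
    rw [abs_mul, abs_of_pos hν0]
    calc ν * |Real.cos x| ≤ ν * 1 := by
          exact mul_le_mul_of_nonneg_left (Real.abs_cos_le_one x) hν0.le
      _ < 1 := by linarith
  -- derivative of ω
  have homega : ∀ x : ℝ, HasDerivAt (fun x => Real.arccos (ν * Real.cos x))
      (ν * Real.sin x / Real.sqrt (1 - ν ^ 2 + (ν * Real.sin x) ^ 2)) x := by
    intro x
    have hb := hbound x
    have h1 : ν * Real.cos x ≠ -1 := by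
      intro h; rw [h] at hb; simp at hb
    have h2 : ν * Real.cos x ≠ 1 := by
      intro h; rw [h] at hb; simp at hb
    have hin : HasDerivAt (fun x => ν * Real.cos x) (ν * -Real.sin x) x :=
      (Real.hasDerivAt_cos x).const_mul ν
    have := (Real.hasDerivAt_arccos h1 h2).comp x hin
    refine this.congr_deriv ?_
    have hsq : 1 - (ν * Real.cos x) ^ 2 = 1 - ν ^ 2 + (ν * Real.sin x) ^ 2 := by
      have := Real.sin_sq_add_cos_sq x; nlinarith
    rw [hsq]
    ring
  -- derivative of f
  have hderiv : ∀ k : ℝ, HasDerivAt f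
      (ν * Real.sin (p + k) / Real.sqrt (1 - ν ^ 2 + (ν * Real.sin (p + k)) ^ 2)
        - ν * Real.sin (p - k) / Real.sqrt (1 - ν ^ 2 + (ν * Real.sin (p - k)) ^ 2)) k := by
    intro k
    have h1 : HasDerivAt (fun k : ℝ => p + k) 1 k := (hasDerivAt_id k).const_add p
    have h2 : HasDerivAt (fun k : ℝ => p - k) (-1) k := by
      simpa using (hasDerivAt_id k).const_sub p
    have hA := (homega (p + k)).comp k h1
    have hB := (homega (p - k)).comp k h2
    have := hA.add hB
    refine this.congr_deriv ?_
    ring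
  have hcont : Continuous f := by
    apply Continuous.add <;> exact Real.continuous_arccos.comp (by fun_prop)
  -- f strictly monotone on [0, π]
  have hmono : StrictMonoOn f (Icc 0 Real.pi) := by
    apply strictMonoOn_of_deriv_pos (convex_Icc 0 Real.pi) hcont.continuousOn
    intro k hk
    rw [interior_Icc] at hk
    rw [(hderiv k).deriv]
    have hsinp : Real.sin (p - k) < Real.sin (p + k) := by
      have h1 : 0 < Real.sin k := Real.sin_pos_of_pos_of_lt_pi hk.1 hk.2
      have : Real.sin (p + k) - Real.sin (p - k) = 2 * Real.cos p * Real.sin k := by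
        rw [Real.sin_add, Real.sin_sub]; ring
      nlinarith
    have ht : ν * Real.sin (p - k) < ν * Real.sin (p + k) :=
      mul_lt_mul_of_pos_left hsinp hν0
    have hc : (0:ℝ) < 1 - ν ^ 2 := by nlinarith
    linarith [aux_div_sqrt hc ht]
  -- f is 2π-periodic and even
  have hper : Function.Periodic f (2 * Real.pi) := by
    intro k
    simp only [hf]
    rw [show p + (k + 2 * Real.pi) = p + k + 2 * Real.pi by ring,
      show p - (k + 2 * Real.pi) = p - k - 2 * Real.pi by ring,
      Real.cos_add_two_pi, Real.cos_sub_two_pi]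
  have heven : ∀ t : ℝ, f (-t) = f t := by
    intro t
    simp only [hf]
    rw [show p + -t = p - t by ring, show p - -t = p + t by ring, add_comm]
  -- values at 0 and π
  have h0 : f 0 = 2 * Real.arccos (ν * Real.cos p) := by
    simp only [hf, add_zero, sub_zero]; ring
  have hπ : f Real.pi = 2 * Real.pi - 2 * Real.arccos (ν * Real.cos p) := by
    simp only [hf]
    rw [Real.cos_add_pi, show p - Real.pi = -(Real.pi - p) by ring, Real.cos_neg,
      Real.cos_pi_sub, show ν * -Real.cos p = -(ν * Real.cos p) by ring,
      Real.arccos_neg]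
    ring
  have hmem : ∀ y ∈ Icc 0 Real.pi, f y ∈ Icc (f 0) (f Real.pi) := by
    intro y hy
    constructor
    · rcases eq_or_lt_of_le hy.1 with h | h
      · rw [← h]
      · exact (hmono (left_mem_Icc.2 Real.pi_pos.le) hy h).le
    · rcases eq_or_lt_of_le hy.2 with h | h
      · rw [h]
      · exact (hmono hy (right_mem_Icc.2 Real.pi_pos.le) h).le
  apply Set.Subset.antisymm
  · rintro _ ⟨k, rfl⟩
    obtain ⟨y, hy, hfy⟩ := hper.exists_mem_Ico Real.two_pi_pos k (-Real.pi)
    have hy' : |y| ∈ Icc 0 Real.pi := by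
      constructor
      · exact abs_nonneg y
      · rw [abs_le]
        constructor
        · exact hy.1
        · have := hy.2; linarith
    have hfy' : f |y| = f y := by
      rcases abs_choice y with h | h
      · rw [h]
      · rw [h, heven]
    have : f k ∈ Icc (f 0) (f Real.pi) := by
      rw [show f k = f |y| from hfy.trans hfy'.symm]
      exact hmem _ hy'
    rw [h0, hπ] at this
    exact this
  · intro y hy
    rw [← hπ, ← h0] at hy
    have hsub : Icc (f 0) (f Real.pi) ⊆ f '' Icc 0 Real.pi :=
      intermediate_value_Icc Real.pi_pos.le hcont.continuousOn
    obtain ⟨x, _, hx⟩ := hsub hy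
    exact ⟨x, hx⟩
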